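/- For any real polynomial p and any σ ∈ ℝ, the number of non-real complex roots (counted with multiplicity) of p_σ = p' + σp does not exceed the number of non-real complex roots (counted with multiplicity) of p. -/

import Mathlib

open Polynomial
open scoped Classical

/-- The Laguerre (generalised) derivative `p_σ = p' + σ·p`. -/
noncomputable def psig (σ : ℝ) (p : Polynomial ℝ) : Polynomial ℝ :=
  derivative p + C σ * p

/-- The number of non-real complex roots of a real polynomial,
counted with multiplicity. -/
noncomputable def Zc (p : Polynomial ℝ) : ℕ :=
  Multiset.card (((p.map (algebraMap ℝ ℂ)).roots).filter (fun z => z.im ≠ 0))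

lemma even_card_filter_conj (S : Multiset ℂ) (hS : S.map (starRingEnd ℂ) = S) :
    Even (Multiset.card (S.filter (fun z => z.im ≠ 0))) := by
  have hcount : ∀ z : ℂ, S.count ((starRingEnd ℂ) z) = S.count z := by
    intro z
    conv_lhs => rw [← hS]
    exact Multiset.count_map_eq_count' _ _ (starRingEnd ℂ).injective z
  have hpart : S.filter (fun z => z.im ≠ 0)
      = S.filter (fun z => 0 < z.im) + S.filter (fun z => z.im < 0) := by
    ext z
    simp only [Multiset.count_add, Multiset.count_filter]
    rcases lt_trichotomy z.im 0 with h | h | h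
    · simp [h, h.ne, asymm h]
    · simp [h]
    · simp [h, h.ne', asymm h]
  have hbij : (S.filter (fun z => 0 < z.im)).map (starRingEnd ℂ)
      = S.filter (fun z => z.im < 0) := by
    ext z
    have hz : z = (starRingEnd ℂ) ((starRingEnd ℂ) z) := by simp
    conv_lhs => rw [hz]
    rw [Multiset.count_map_eq_count' _ _ (starRingEnd ℂ).injective,
      Multiset.count_filter, Multiset.count_filter, hcount]
    simp [Complex.conj_im, neg_pos]
  rw [hpart, Multiset.card_add, ← hbij, Multiset.card_map]
  exact Even.add_self _

lemma roots_conj (p : Polynomial ℝ) :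
    (p.map (algebraMap ℝ ℂ)).roots.map (starRingEnd ℂ) = (p.map (algebraMap ℝ ℂ)).roots := by
  have h : ((p.map (algebraMap ℝ ℂ)).map (starRingEnd ℂ)) = p.map (algebraMap ℝ ℂ) := by
    rw [map_map]
    congr 1
    ext x
    simp [Complex.conj_ofReal]
  calc (p.map (algebraMap ℝ ℂ)).roots.map (starRingEnd ℂ)
      = ((p.map (algebraMap ℝ ℂ)).map (starRingEnd ℂ)).roots :=
        ((IsAlgClosed.splits _).roots_map _).symm
    _ = (p.map (algebraMap ℝ ℂ)).roots := by rw [h]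

lemma even_Zc (p : Polynomial ℝ) : Even (Zc p) :=
  even_card_filter_conj _ (roots_conj p)

lemma real_roots_eq (p : Polynomial ℝ) (hp : p ≠ 0) :
    (p.map (algebraMap ℝ ℂ)).roots.filter (fun z => ¬ z.im ≠ 0)
      = p.roots.map (algebraMap ℝ ℂ) := by
  have hinj : Function.Injective (algebraMap ℝ ℂ) := (algebraMap ℝ ℂ).injective
  have hmapne : p.map (algebraMap ℝ ℂ) ≠ 0 := (Polynomial.map_ne_zero_iff hinj).mpr hp
  ext z
  rw [Multiset.count_filter]
  by_cases h : z.im = 0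
  · have hz : z = algebraMap ℝ ℂ z.re := by
      apply Complex.ext <;> simp [h]
    rw [if_pos (by simpa using h)]
    conv_lhs => rw [hz]
    conv_rhs => rw [hz]
    rw [Multiset.count_map_eq_count' _ _ hinj, count_roots, count_roots,
      ← eq_rootMultiplicity_map hinj]
  · rw [if_neg (by simpa using h)]
    symm
    rw [Multiset.count_eq_zero]
    intro hmem
    obtain ⟨x, _, rfl⟩ := Multiset.mem_map.mp hmem
    exact h (by simp)

lemma zc_add_card (p : Polynomial ℝ) (hp : p ≠ 0) :
    Zc p + Multiset.card p.roots = p.natDegree := by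
  have hinj : Function.Injective (algebraMap ℝ ℂ) := (algebraMap ℝ ℂ).injective
  have htot : Multiset.card (p.map (algebraMap ℝ ℂ)).roots = p.natDegree :=
    by rw [← (IsAlgClosed.splits (p.map (algebraMap ℝ ℂ))).natDegree_eq_card_roots, natDegree_map]
  have := Multiset.filter_add_not (fun z : ℂ => z.im ≠ 0) (p.map (algebraMap ℝ ℂ)).roots
  calc Zc p + Multiset.card p.roots
      = Multiset.card ((p.map (algebraMap ℝ ℂ)).roots.filter (fun z => z.im ≠ 0))
        + Multiset.card ((p.map (algebraMap ℝ ℂ)).roots.filter (fun z => ¬ z.im ≠ 0)) := by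
        rw [Zc, real_roots_eq p hp, Multiset.card_map]
    _ = Multiset.card (p.map (algebraMap ℝ ℂ)).roots := by rw [← Multiset.card_add, this]
    _ = p.natDegree := htot
lemma hasDerivAt_aux (σ : ℝ) (p : Polynomial ℝ) (x : ℝ) :
    HasDerivAt (fun x => Real.exp (σ * x) * p.eval x)
      (Real.exp (σ * x) * (psig σ p).eval x) x := by
  have h1 : HasDerivAt (fun x : ℝ => Real.exp (σ * x)) (Real.exp (σ * x) * σ) x := by
    simpa using (((hasDerivAt_id x).const_mul σ).exp)
  have h2 := p.hasDerivAt x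
  have : HasDerivAt (fun x => Real.exp (σ * x) * p.eval x) _ x := h1.mul h2
  convert this using 1
  simp [psig]
  ring

lemma psig_root_between (σ : ℝ) (p : Polynomial ℝ) {x y : ℝ} (hxy : x < y)
    (hx : p.eval x = 0) (hy : p.eval y = 0) :
    ∃ z ∈ Set.Ioo x y, (psig σ p).eval z = 0 := by
  have hcont : ContinuousOn (fun x => Real.exp (σ * x) * p.eval x) (Set.Icc x y) :=
    ((Real.continuous_exp.comp (continuous_const.mul continuous_id)).mul
      p.continuous_aeval).continuousOn
  have hfxy : Real.exp (σ * x) * p.eval x = Real.exp (σ * y) * p.eval y := by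
    rw [hx, hy]; ring
  obtain ⟨z, hz1, hz2⟩ := exists_deriv_eq_zero hxy hcont hfxy
  refine ⟨z, hz1, ?_⟩
  have := (hasDerivAt_aux σ p z).deriv
  rw [this] at hz2
  have hexp := Real.exp_ne_zero (σ * z)
  exact (mul_eq_zero.mp hz2).resolve_left hexp

lemma mult_psig (σ : ℝ) (p : Polynomial ℝ) (hps : psig σ p ≠ 0) (x : ℝ) :
    p.rootMultiplicity x - 1 ≤ (psig σ p).rootMultiplicity x := by
  rcases eq_or_ne p 0 with rfl | hp
  · simp
  rw [le_rootMultiplicity_iff hps]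
  have h1 : (X - C x) ^ (p.rootMultiplicity x - 1) ∣ derivative p := by
    rcases eq_or_ne (derivative p) 0 with h | h
    · simp [h]
    calc (X - C x) ^ (p.rootMultiplicity x - 1)
        ∣ (X - C x) ^ ((derivative p).rootMultiplicity x) :=
          pow_dvd_pow _ (rootMultiplicity_sub_one_le_derivative_rootMultiplicity p x)
      _ ∣ derivative p := pow_rootMultiplicity_dvd _ _
  have h2 : (X - C x) ^ (p.rootMultiplicity x - 1) ∣ C σ * p := by
    refine Dvd.dvd.mul_left ?_ _
    calc (X - C x) ^ (p.rootMultiplicity x - 1)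
        ∣ (X - C x) ^ (p.rootMultiplicity x) := pow_dvd_pow _ (Nat.sub_le _ _)
      _ ∣ p := pow_rootMultiplicity_dvd _ _
  exact dvd_add h1 h2

lemma card_roots_toFinset_psig (σ : ℝ) (p : Polynomial ℝ) (hp : p ≠ 0)
    (hps : psig σ p ≠ 0) :
    p.roots.toFinset.card ≤ ((psig σ p).roots.toFinset \ p.roots.toFinset).card + 1 := by
  refine Finset.card_le_diff_of_interleaved fun x hx y hy hxy _ => ?_
  rw [Multiset.mem_toFinset, mem_roots hp] at hx hy
  obtain ⟨z, hz1, hz2⟩ := psig_root_between σ p hxy hx hy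
  exact ⟨z, by rwa [Multiset.mem_toFinset, mem_roots hps], hz1⟩

lemma card_roots_le_psig (σ : ℝ) (p : Polynomial ℝ) (hp : p ≠ 0) (hps : psig σ p ≠ 0) :
    Multiset.card p.roots ≤ Multiset.card (psig σ p).roots + 1 :=
  calc
    Multiset.card p.roots = ∑ x ∈ p.roots.toFinset, p.roots.count x :=
      (Multiset.toFinset_sum_count_eq _).symm
    _ = ∑ x ∈ p.roots.toFinset, (p.roots.count x - 1 + 1) :=
      (Eq.symm <| Finset.sum_congr rfl fun _ hx => tsub_add_cancel_of_le <|
        Nat.succ_le_iff.2 <| Multiset.count_pos.2 <| Multiset.mem_toFinset.1 hx)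
    _ = (∑ x ∈ p.roots.toFinset, (p.rootMultiplicity x - 1)) + p.roots.toFinset.card := by
      simp only [Finset.sum_add_distrib, Finset.card_eq_sum_ones, count_roots]
    _ ≤ (∑ x ∈ p.roots.toFinset, (psig σ p).rootMultiplicity x) +
          (((psig σ p).roots.toFinset \ p.roots.toFinset).card + 1) :=
      (add_le_add
        (Finset.sum_le_sum fun x _ => mult_psig σ p hps x)
        (card_roots_toFinset_psig σ p hp hps))
    _ ≤ (∑ x ∈ p.roots.toFinset, (psig σ p).roots.count x) +
          ((∑ x ∈ (psig σ p).roots.toFinset \ p.roots.toFinset,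
            (psig σ p).roots.count x) + 1) := by
      simp only [← count_roots]
      refine add_le_add_right (add_le_add_left ((Finset.card_eq_sum_ones _).trans_le ?_) _) _
      refine Finset.sum_le_sum fun x hx => Nat.succ_le_iff.2 <| ?_
      rw [Multiset.count_pos, ← Multiset.mem_toFinset]
      exact (Finset.mem_sdiff.1 hx).1
    _ = Multiset.card (psig σ p).roots + 1 := by
      rw [← add_assoc, ← Finset.sum_union Finset.disjoint_sdiff, Finset.union_sdiff_self_eq_union,
        ← Multiset.toFinset_sum_count_eq, ← Finset.sum_subset Finset.subset_union_right]
      intro x _ hx₂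
      simpa only [Multiset.mem_toFinset, Multiset.count_eq_zero] using hx₂
theorem stmt12 (p : Polynomial ℝ) (σ : ℝ) : Zc (psig σ p) ≤ Zc p := by
  rcases eq_or_ne (psig σ p) 0 with h | hps
  · have : Zc (psig σ p) = 0 := by rw [h]; simp [Zc]
    omega
  have hp : p ≠ 0 := by rintro rfl; simp [psig] at hps
  have hA := zc_add_card p hp
  have hB := zc_add_card _ hps
  have hcard := card_roots_le_psig σ p hp hps
  have hcardle : Multiset.card (psig σ p).roots ≤ (psig σ p).natDegree :=
    (psig σ p).card_roots'
  rcases eq_or_ne σ 0 with rfl | hσ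
  · have hps' : psig 0 p = derivative p := by simp [psig]
    have hd0 : p.natDegree ≠ 0 := by
      intro h0
      apply hps
      rw [hps', eq_C_of_natDegree_eq_zero h0]
      simp
    have hdd : (derivative p).natDegree = p.natDegree - 1 :=
      natDegree_eq_of_degree_eq_some (degree_derivative_eq p (Nat.pos_of_ne_zero hd0))
    rw [hps'] at hB hcard ⊢
    omega
  · have hdeq : (psig σ p).natDegree = p.natDegree := by
      apply natDegree_eq_of_degree_eq
      rw [psig]
      rw [degree_add_eq_right_of_degree_lt, degree_C_mul hσ]
      rw [degree_C_mul hσ]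
      exact degree_derivative_lt hp
    obtain ⟨a, ha⟩ := even_Zc p
    obtain ⟨b, hb⟩ := even_Zc (psig σ p)
    omega
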